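/- There exists an instance of the min-max shortest path problem demonstrating tightness of the aggregation bound: for K = 2^k scenarios aggregated into 2^ℓ groups of r = 2^{k−ℓ} consecutive scenarios, there are two s-t paths P_top and P_bot such that (a) both paths have identical (and equal) worst-case cost with respect to the aggregated scenarios, (b) the worst-case cost of P_top over the original K scenarios is r, and (c) the worst-case cost of P_bot over the original K scenarios is 1. Hence an optimal solution of the aggregated problem can be a factor r = K/2^ℓ worse than the optimum of the original problem. -/

import Mathlib

/-- Tightness of the aggregation bound for min-max shortest path, in abstract
form: for `K = 2^k` scenarios aggregated into `2^l` consecutive groups of size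
`r = 2^(k-l)`, there are two path cost vectors `vtop` and `vbot` (giving the
total cost of the path in each scenario) such that both have all aggregated
costs equal to `1`, while the worst-case cost of the top path is `r` and that
of the bottom path is `1`. -/
theorem stmt8 (k l : ℕ) (hl : l ≤ k) :
    ∃ vtop vbot : Fin (2 ^ k) → ℝ,
      (∀ j : Fin (2 ^ l),
        (1 / ((2 ^ (k - l) : ℕ) : ℝ)) *
            (∑ i ∈ Finset.univ.filter
              (fun i : Fin (2 ^ k) => i.val / 2 ^ (k - l) = j.val), vtop i) = 1 ∧
        (1 / ((2 ^ (k - l) : ℕ) : ℝ)) *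
            (∑ i ∈ Finset.univ.filter
              (fun i : Fin (2 ^ k) => i.val / 2 ^ (k - l) = j.val), vbot i) = 1) ∧
      Finset.univ.sup' ⟨⟨0, by positivity⟩, Finset.mem_univ _⟩ vtop
        = ((2 ^ (k - l) : ℕ) : ℝ) ∧
      Finset.univ.sup' ⟨⟨0, by positivity⟩, Finset.mem_univ _⟩ vbot = 1 := by
  set r : ℕ := 2 ^ (k - l) with hr_def
  have hr : 0 < r := pow_pos (by norm_num) _
  have hrR : (0 : ℝ) < (r : ℝ) := by exact_mod_cast hr
  refine ⟨fun i => if r ∣ i.val then (r : ℝ) else 0, fun _ => 1, ?_, ?_, ?_⟩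
  · intro j
    -- the filter as a Fin-set corresponds to Ico (j*r) (j*r + r) in ℕ
    have hkey : ∀ f : ℕ → ℝ,
        (∑ i ∈ Finset.univ.filter
            (fun i : Fin (2 ^ k) => i.val / r = j.val), f i.val)
          = ∑ i ∈ Finset.Ico (j.val * r) (j.val * r + r), f i := by
      intro f
      rw [Finset.sum_filter, Fin.sum_univ_eq_sum_range
        (fun i => if i / r = j.val then f i else 0), ← Finset.sum_filter]
      congr 1
      ext i
      simp only [Finset.mem_filter, Finset.mem_range, Finset.mem_Ico]
      constructor
      · rintro ⟨-, hdiv⟩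
        have h1 := Nat.div_add_mod i r
        have h2 := Nat.mod_lt i hr
        rw [hdiv, mul_comm] at h1
        omega
      · rintro ⟨h1, h2⟩
        have hjr : j.val * r + r ≤ 2 ^ k := by
          have : (j.val + 1) * r ≤ 2 ^ l * r := by
            exact Nat.mul_le_mul_right r j.isLt
          have h2k : 2 ^ l * r = 2 ^ k := by
            rw [hr_def, ← pow_add]
            congr 1
            omega
          rw [Nat.add_mul, one_mul] at this
          omega
        refine ⟨by omega, ?_⟩
        exact Nat.div_eq_of_lt_le h1 (by simpa [Nat.succ_mul] using h2)
    constructor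
    · rw [hkey (fun i => if r ∣ i then (r : ℝ) else 0)]
      rw [Finset.sum_eq_single (j.val * r)]
      · rw [if_pos ⟨j.val, mul_comm _ _⟩]
        field_simp
      · intro b hb hne
        rw [if_neg]
        rintro ⟨c, rfl⟩
        simp only [Finset.mem_Ico] at hb
        have : j.val ≤ c := by
          by_contra h
          push_neg at h
          have : (c + 1) * r ≤ j.val * r := Nat.mul_le_mul_right r (by omega)
          have := hb.1
          nlinarith [hb.1]
        have : c ≤ j.val := by
          by_contra h
          push_neg at h
          have : (j.val + 1) * r ≤ c * r := Nat.mul_le_mul_right r (by omega)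
          have := hb.2
          nlinarith [hb.2]
        apply hne
        have : c = j.val := by omega
        rw [this, mul_comm]
      · intro h
        exact absurd (Finset.mem_Ico.mpr ⟨le_refl _, by omega⟩) h
    · rw [hkey (fun _ => (1 : ℝ))]
      simp only [Finset.sum_const, Nat.add_sub_cancel_left, Nat.card_Ico,
        nsmul_eq_mul, mul_one]
      field_simp
  · apply le_antisymm
    · apply Finset.sup'_le
      intro i _
      split <;> simp [le_of_lt hrR]
    · have h0 := Finset.le_sup' (fun i : Fin (2 ^ k) => if r ∣ i.val then (r : ℝ) else 0)
        (Finset.mem_univ (⟨0, by positivity⟩ : Fin (2 ^ k)))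
      simpa using h0
  · exact Finset.sup'_const ..
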